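/- arXiv:2209.01443 — 4 statements merged into one kernel-verified Lean document; each statement's English description precedes it below -/
import Mathlib

section
/- The 6×6 boat–star substitution matrix M = [[1,1,1,0,0,0],[5,3,1,0,0,0],[0,0,0,2,1,0],[5,3,1,4,2,0],[0,0,0,1,3,5],[0,0,0,1,1,1]] has characteristic polynomial with roots exactly φ⁴, 4, 1, φ⁻⁴, 0, 0, where φ = (1+√5)/2 is the golden ratio. -/
open Real

noncomputable def boatStarM : Matrix (Fin 6) (Fin 6) ℝ :=
  !![1,1,1,0,0,0;
     5,3,1,0,0,0;
     0,0,0,2,1,0;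
     5,3,1,4,2,0;
     0,0,0,1,3,5;
     0,0,0,1,1,1]

noncomputable def goldenφ : ℝ := (1 + Real.sqrt 5) / 2

open Polynomial in
set_option maxHeartbeats 2000000 in
set_option maxRecDepth 20000 in
lemma boatStar_charpoly_eq :
    boatStarM.charpoly = X^6 - 12*X^5 + 40*X^4 - 33*X^3 + 4*X^2 := by
  rw [Matrix.charpoly]
  have hM : Matrix.charmatrix boatStarM = !![X - 1, -1, -1, 0, 0, 0;
      -5, X - 3, -1, 0, 0, 0;
      0, 0, X, -2, -1, 0;
      -5, -3, -1, X - 4, -2, 0;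
      0, 0, 0, -1, X - 3, -5;
      0, 0, 0, -1, -1, X - 1] := by
    ext i j
    fin_cases i <;> fin_cases j <;>
      simp [Matrix.charmatrix_apply, boatStarM, Matrix.diagonal_apply, map_ofNat]
  rw [hM]
  simp [Matrix.det_succ_row_zero, Fin.sum_univ_succ, Fin.succAbove]
  ring

lemma goldenφ_pow_four : goldenφ ^ 4 = (7 + 3 * Real.sqrt 5) / 2 := by
  have hs : Real.sqrt 5 ^ 2 = 5 := Real.sq_sqrt (by norm_num)
  unfold goldenφ
  linear_combination ((Real.sqrt 5 ^ 2 + 4 * Real.sqrt 5 + 11) / 16) * hs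

lemma goldenφ_pow_four_inv : (goldenφ ^ 4)⁻¹ = (7 - 3 * Real.sqrt 5) / 2 := by
  have hs : Real.sqrt 5 ^ 2 = 5 := Real.sq_sqrt (by norm_num)
  rw [goldenφ_pow_four]
  exact inv_eq_of_mul_eq_one_right (by linear_combination (-9/4) * hs)

open Polynomial in
theorem boatStar_charpoly_roots :
    (Matrix.charpoly boatStarM).roots =
      {goldenφ ^ 4, 4, 1, (goldenφ ^ 4)⁻¹, 0, 0} := by
  have hs : Real.sqrt 5 ^ 2 = 5 := Real.sq_sqrt (by norm_num)
  have hsum : goldenφ ^ 4 + (goldenφ ^ 4)⁻¹ = 7 := by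
    rw [goldenφ_pow_four_inv, goldenφ_pow_four]; ring
  have hprod : goldenφ ^ 4 * (goldenφ ^ 4)⁻¹ = 1 := by
    rw [goldenφ_pow_four_inv, goldenφ_pow_four]
    linear_combination (-9/4) * hs
  have h1 : C (goldenφ ^ 4) + C ((goldenφ ^ 4)⁻¹) = 7 := by
    rw [← C_add, hsum]; exact map_ofNat C 7
  have h2 : C (goldenφ ^ 4) * C ((goldenφ ^ 4)⁻¹) = 1 := by
    rw [← C_mul, hprod, C_1]
  have key : Matrix.charpoly boatStarM =
      (({goldenφ ^ 4, 4, 1, (goldenφ ^ 4)⁻¹, 0, 0} : Multiset ℝ).map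
        fun a => X - C a).prod := by
    rw [boatStar_charpoly_eq]
    simp only [Multiset.insert_eq_cons, Multiset.map_cons, Multiset.map_singleton,
      Multiset.prod_cons, Multiset.prod_singleton, C_0, sub_zero]
    have h4 : (C (4:ℝ)) = 4 := map_ofNat C 4
    have h1' : (C (1:ℝ)) = 1 := C_1
    rw [h4, h1']
    linear_combination (X^3*(X^2 - 5*X + 4)) * h1 + (-(X^2)*(X^2 - 5*X + 4)) * h2
  rw [key, Polynomial.roots_multiset_prod_X_sub_C]
end

section
/- Let M be the boat–star substitution matrix. The vector v₁ = (1/2)·(3−√5, −5+3√5, 5−√5, 5+√5, 2√5, 2)ᵀ satisfies M v₁ = φ⁴ v₁, where φ = (1+√5)/2. -/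
open Real

noncomputable def v₁ : Fin 6 → ℝ :=
  ![(3 - Real.sqrt 5) / 2, (-5 + 3 * Real.sqrt 5) / 2, (5 - Real.sqrt 5) / 2,
    (5 + Real.sqrt 5) / 2, (2 * Real.sqrt 5) / 2, 2 / 2]

set_option maxRecDepth 10000 in
theorem boatStar_v1_eigen :
    boatStarM.mulVec v₁ = goldenφ ^ 4 • v₁ := by
  have h2 : Real.sqrt 5 ^ 2 = 5 := Real.sq_sqrt (by norm_num)
  have h3 : Real.sqrt 5 ^ 3 = 5 * Real.sqrt 5 := by
    rw [pow_succ, h2]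
  have h4 : Real.sqrt 5 ^ 4 = 25 := by
    rw [show Real.sqrt 5 ^ 4 = (Real.sqrt 5 ^ 2) ^ 2 by ring, h2]; norm_num
  have h5p : Real.sqrt 5 ^ 5 = 25 * Real.sqrt 5 := by
    rw [pow_succ, h4]
  funext i
  fin_cases i <;>
    simp [boatStarM, goldenφ, v₁, Matrix.mulVec, dotProduct,
      Fin.sum_univ_succ, Matrix.cons_val_succ,
      show (⟨5, by norm_num⟩:Fin 6) = (0:Fin 1).succ.succ.succ.succ.succ from rfl] <;>
    ring_nf <;> simp only [h2, h3, h4, h5p] <;> linarith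
end

section
/- For every n ≥ 0, the total number of tiles in the n-th boat–star supertile generated from a single star equals P(n) = (25+9√5)/22 · φ^{4n} − (5/33)·4^{n+1} − 2/3 + (25−9√5)/22 · φ^{−4n}, where φ = (1+√5)/2. Formally: with M the boat–star substitution matrix, w = (1,1,1,1,1,1)ᵀ, and e₁ the first standard basis vector, ⟨w, Mⁿ e₁⟩ = P(n) for all n ∈ ℕ. -/
open Real Matrix

noncomputable def bsV (n : ℕ) : Fin 6 → ℝ := fun i =>
  ![(13 - 5*Real.sqrt 5)/22, (-25 + 13*Real.sqrt 5)/22, (10 - 3*Real.sqrt 5)/11,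
    (15 + Real.sqrt 5)/22, (-5 + 7*Real.sqrt 5)/22, (7 - Real.sqrt 5)/22] i
      * ((7 + 3*Real.sqrt 5)/2)^n
  + ![5/33, 20/33, -5/33, 10/33, -40/33, -10/33] i * 4^n
  + ![-1/3, 5/3, -5/3, -5/3, 5/3, -1/3] i
  + ![(13 + 5*Real.sqrt 5)/22, (-25 - 13*Real.sqrt 5)/22, (10 + 3*Real.sqrt 5)/11,
      (15 - Real.sqrt 5)/22, (-5 - 7*Real.sqrt 5)/22, (7 + Real.sqrt 5)/22] i
      * ((7 - 3*Real.sqrt 5)/2)^n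

lemma vec6_five {α : Type*} {m : ℕ} (x : α) (u : Fin (m+5) → α) :
    Matrix.vecCons x u 5 =
      Matrix.vecHead (Matrix.vecTail (Matrix.vecTail (Matrix.vecTail (Matrix.vecTail u)))) := rfl

lemma bsKey (n : ℕ) :
    (boatStarM ^ n).mulVec (fun i => if i = 0 then (1 : ℝ) else 0) = bsV n := by
  have hs : Real.sqrt 5 ^ 2 = 5 := Real.sq_sqrt (by norm_num)
  induction n with
  | zero =>
    rw [pow_zero, Matrix.one_mulVec]
    funext i
    fin_cases i <;> simp [bsV, vec6_five] <;> ring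
  | succ n ih =>
    rw [pow_succ', ← Matrix.mulVec_mulVec, ih]
    funext i
    fin_cases i <;>
      simp [boatStarM, Matrix.mulVec, dotProduct, Fin.sum_univ_six, bsV, vec6_five]
    · linear_combination (15/44 * (((7 + 3*Real.sqrt 5)/2)^n + ((7 - 3*Real.sqrt 5)/2)^n)) * hs
    · linear_combination (-39/44 * (((7 + 3*Real.sqrt 5)/2)^n + ((7 - 3*Real.sqrt 5)/2)^n)) * hs
    · linear_combination (9/22 * (((7 + 3*Real.sqrt 5)/2)^n + ((7 - 3*Real.sqrt 5)/2)^n)) * hs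
    · linear_combination (-3/44 * (((7 + 3*Real.sqrt 5)/2)^n + ((7 - 3*Real.sqrt 5)/2)^n)) * hs
    · linear_combination (-21/44 * (((7 + 3*Real.sqrt 5)/2)^n + ((7 - 3*Real.sqrt 5)/2)^n)) * hs
    · linear_combination (3/44 * (((7 + 3*Real.sqrt 5)/2)^n + ((7 - 3*Real.sqrt 5)/2)^n)) * hs

theorem boatStar_total_tile_count (n : ℕ) :
    (fun _ : Fin 6 => (1 : ℝ)) ⬝ᵥ
        (boatStarM ^ n).mulVec (fun i => if i = 0 then (1 : ℝ) else 0) =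
      (25 + 9 * Real.sqrt 5) / 22 * goldenφ ^ (4 * n)
        - 5 / 33 * 4 ^ (n + 1) - 2 / 3
        + (25 - 9 * Real.sqrt 5) / 22 * (goldenφ ^ (4 * n))⁻¹ := by
  have hs : Real.sqrt 5 ^ 2 = 5 := Real.sq_sqrt (by norm_num)
  have hφ4 : goldenφ ^ 4 = (7 + 3*Real.sqrt 5)/2 := by
    unfold goldenφ
    linear_combination ((Real.sqrt 5 ^ 2 + 4*Real.sqrt 5 + 11)/16) * hs
  have hαβ : ((7 + 3*Real.sqrt 5)/2) * ((7 - 3*Real.sqrt 5)/2) = 1 := by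
    linear_combination (-9/4) * hs
  have hinv : (goldenφ ^ (4 * n))⁻¹ = ((7 - 3*Real.sqrt 5)/2)^n := by
    rw [pow_mul, hφ4, ← inv_pow, inv_eq_of_mul_eq_one_right hαβ]
  rw [bsKey, hinv, pow_mul, hφ4]
  simp [dotProduct, Fin.sum_univ_six, bsV, vec6_five]
  ring
end

section
/- Let Γ = (V, E) be a (possibly infinite, locally finite) graph with Laplacian Δ, let P ⊆ V be finite, and let ψ: V → ℝ be supported in P with Δψ = Eψ. Suppose every vertex u ∉ P adjacent to P satisfies Σ_{w∈P, w~u} ψ(w) = 0. If V₀ ⊆ V is any finite subset containing P together with all vertices adjacent to P, then E is an eigenvalue of the Laplacian Δ₀ of the induced subgraph on V₀, with eigenvector the restriction of ψ to V₀. -/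
open Finset

/-- A locally-supported Laplacian eigenfunction on an infinite locally finite graph
restricts to an eigenvector of the Laplacian of the induced subgraph on any finite
vertex set containing the support together with all of its neighbors. -/
theorem locally_supported_eigenfunction_descends
    {V : Type*} [DecidableEq V] (G : SimpleGraph V) [DecidableRel G.Adj] [G.LocallyFinite]
    (P : Finset V) (ψ : V → ℝ) (E : ℝ)
    (hψ : ψ ≠ 0)
    (hsupp : ∀ v, v ∉ P → ψ v = 0)
    (heig : ∀ v, ((G.degree v : ℝ)) * ψ v - ∑ u ∈ G.neighborFinset v, ψ u = E * ψ v)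
    (hbdry : ∀ u, u ∉ P → (∃ w ∈ P, G.Adj u w) →
      ∑ w ∈ G.neighborFinset u ∩ P, ψ w = 0)
    (V₀ : Finset V) (hPV₀ : P ⊆ V₀)
    (hnbr : ∀ u v, v ∈ P → G.Adj u v → u ∈ V₀) :
    (fun v : {x // x ∈ V₀} => ψ v) ≠ 0 ∧
      ∀ v : {x // x ∈ V₀},
        ((V₀.filter (fun u => G.Adj (v : V) u)).card : ℝ) * ψ v
            - ∑ u ∈ V₀.filter (fun u => G.Adj (v : V) u), ψ u
          = E * ψ v := by
  constructor
  · -- nonvanishing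
    obtain ⟨v, hv⟩ := Function.ne_iff.mp hψ
    have hvP : v ∈ P := by
      by_contra h
      exact hv (hsupp v h)
    intro h
    exact hv (congrFun h ⟨v, hPV₀ hvP⟩)
  · rintro ⟨v, hvV⟩
    simp only
    by_cases hvP : v ∈ P
    · -- all neighbors of v are in V₀
      have hfil : V₀.filter (fun u => G.Adj v u) = G.neighborFinset v := by
        ext u
        simp only [mem_filter, SimpleGraph.mem_neighborFinset]
        exact ⟨fun h => h.2, fun h => ⟨hnbr u v hvP h.symm, h⟩⟩
      rw [hfil]
      have := heig v
      rwa [SimpleGraph.degree] at this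
    · have hψv : ψ v = 0 := hsupp v hvP
      rw [hψv, mul_zero, mul_zero, zero_sub, neg_eq_zero]
      have hsum : ∑ u ∈ V₀.filter (fun u => G.Adj v u), ψ u
          = ∑ u ∈ G.neighborFinset v ∩ P, ψ u := by
        apply (Finset.sum_subset ?_ ?_).symm
        · intro u hu
          rw [mem_inter, SimpleGraph.mem_neighborFinset] at hu
          exact mem_filter.mpr ⟨hPV₀ hu.2, hu.1⟩
        · intro u hu hnu
          rw [mem_filter] at hu
          apply hsupp
          intro huP
          exact hnu (mem_inter.mpr ⟨(SimpleGraph.mem_neighborFinset G v u).mpr hu.2, huP⟩)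
      rw [hsum]
      by_cases hex : ∃ w ∈ P, G.Adj v w
      · exact hbdry v hvP hex
      · have : G.neighborFinset v ∩ P = ∅ := by
          rw [eq_empty_iff_forall_notMem]
          intro u hu
          rw [mem_inter, SimpleGraph.mem_neighborFinset] at hu
          exact hex ⟨u, hu.2, hu.1⟩
        rw [this, sum_empty]
end
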